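/- As a consequence, if (u',t') = e^{(f,a)} ∗ (u,t) for Maurer–Cartan elements in the cocone DG-Lie algebra M, then the classes of s+t' and e^f(s+t) agree in the cohomology H^0(E^* ⊗ A, ∂+u'), and there exists b ∈ E^{-1} ⊗ m_A such that e^{(0,b)} e^{(f,a)} ∗ (u,t) = (u', e^f(s+t) − s). -/

import Mathlib

/-!
STATEMENT 11. As a consequence of the previous lemma, if `(u',t') = e^{(f,a)} ∗ (u,t)` for
Maurer–Cartan elements in the cocone DG-Lie algebra `M`, then the classes of `s+t'` and
`e^f(s+t)` agree in the cohomology `H^0(E^* ⊗ A, ∂+u')` (i.e. their difference is a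
coboundary, an element of the image of `∂+u'` on `E^{-1} ⊗ m_A`), and there exists
`b ∈ E^{-1} ⊗ m_A` such that `e^{(0,b)} e^{(f,a)} ∗ (u,t) = (u', e^f(s+t) − s)`.

Model as in the previous file: `M = End_K(E) × E`, gauge action given by the truncated
series (stable for truncation length `m ≥ 2N + 1`, where `f ^ N = 0`).
-/

namespace Stmt11

/-- The sign `(-1)^n` for `n : ℤ`. -/
def sgn (n : ℤ) : ℤ := if Even n then 1 else -1

variable {K E : Type*} [Field K] [CharZero K] [AddCommGroup E] [Module K E]

/-- Bracket of `M = End(E) ⊕ E[-1]` (degree tags `a`, `b`). -/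
def br (a b : ℤ) (p q : Module.End K E × E) : Module.End K E × E :=
  (p.1 * q.1 - sgn (a * b) • (q.1 * p.1), p.1 q.2 - sgn (a * b) • q.1 p.2)

/-- Differential of `M` on elements of degree `a`. -/
def dM (D : Module.End K E) (s : E) (a : ℤ) (p : Module.End K E × E) :
    Module.End K E × E :=
  (D * p.1 - sgn a • (p.1 * D), D p.2 - sgn a • p.1 s)

/-- The gauge action of a degree-0 element on a degree-1 element, truncated at `m`. -/
def gaugeM (m : ℕ) (D : Module.End K E) (s : E) (a p : Module.End K E × E) :
    Module.End K E × E :=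
  p + ∑ n ∈ Finset.range m, ((n + 1).factorial : K)⁻¹ •
      ((fun y => br 0 1 a y)^[n] (br 0 1 a p - dM D s 0 a))

/-- Truncated exponential `e^f = Σ_{n<m} f^n/n!`. -/
def expo (m : ℕ) (f : Module.End K E) : Module.End K E :=
  ∑ n ∈ Finset.range m, ((n.factorial : K)⁻¹) • f ^ n

/-! ### Auxiliary lemmas -/

section Aux

set_option linter.unusedSectionVars false

open Finset

lemma tri_reindex {V : Type*} [AddCommMonoid V] (g : ℕ → ℕ → V) (M : ℕ) :
    ∑ k ∈ range M, ∑ i ∈ range (k + 1), g i (k - i)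
      = ∑ p ∈ range M, ∑ q ∈ range (M - p), g p q := by
  induction M with
  | zero => simp
  | succ M ih =>
    calc ∑ k ∈ range (M + 1), ∑ i ∈ range (k + 1), g i (k - i)
        = (∑ k ∈ range M, ∑ i ∈ range (k + 1), g i (k - i))
            + ∑ i ∈ range (M + 1), g i (M - i) := sum_range_succ _ M
      _ = (∑ p ∈ range M, ∑ q ∈ range (M - p), g p q)
            + ((∑ i ∈ range M, g i (M - i)) + g M 0) := by
            rw [ih, sum_range_succ, Nat.sub_self]
      _ = (∑ p ∈ range M, (∑ q ∈ range (M - p), g p q + g p (M - p))) + g M 0 := by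
            rw [sum_add_distrib]; abel
      _ = ∑ p ∈ range (M + 1), ∑ q ∈ range (M + 1 - p), g p q := by
            rw [sum_range_succ (fun p => ∑ q ∈ range (M + 1 - p), g p q) M]
            have h1 : ∀ p ∈ range M, ∑ q ∈ range (M + 1 - p), g p q
                = ∑ q ∈ range (M - p), g p q + g p (M - p) := by
              intro p hp
              have hp' : p < M := mem_range.1 hp
              have h2 : M + 1 - p = (M - p) + 1 := by omega
              rw [h2, sum_range_succ]
            rw [sum_congr rfl h1]
            have h3 : M + 1 - M = 1 := by omega
            rw [h3, sum_range_one]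

lemma square_trim {V : Type*} [AddCommMonoid V] (g : ℕ → ℕ → V) (N : ℕ)
    (hv : ∀ p q, N ≤ p ∨ N ≤ q → g p q = 0) {m : ℕ} (hm : N ≤ m) :
    ∑ p ∈ range m, ∑ q ∈ range m, g p q = ∑ p ∈ range N, ∑ q ∈ range N, g p q := by
  have inner : ∀ p, ∑ q ∈ range m, g p q = ∑ q ∈ range N, g p q := fun p =>
    (sum_subset (range_subset_range.2 hm) fun q _ hq =>
      hv p q (Or.inr (Nat.le_of_not_lt (fun h => hq (mem_range.2 h))))).symm
  calc ∑ p ∈ range m, ∑ q ∈ range m, g p q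
      = ∑ p ∈ range m, ∑ q ∈ range N, g p q := sum_congr rfl fun p _ => inner p
    _ = ∑ p ∈ range N, ∑ q ∈ range N, g p q :=
        (sum_subset (range_subset_range.2 hm) fun p _ hp =>
          sum_eq_zero fun q _ =>
            hv p q (Or.inl (Nat.le_of_not_lt (fun h => hp (mem_range.2 h))))).symm

lemma tri_to_square {V : Type*} [AddCommMonoid V] (g : ℕ → ℕ → V) (N : ℕ)
    (hv : ∀ p q, N ≤ p ∨ N ≤ q → g p q = 0) {M m : ℕ} (hM : 2 * N ≤ M) (hm : N ≤ m) :
    ∑ k ∈ range M, ∑ i ∈ range (k + 1), g i (k - i)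
      = ∑ p ∈ range m, ∑ q ∈ range m, g p q := by
  rw [tri_reindex, square_trim g N hv hm]
  calc ∑ p ∈ range M, ∑ q ∈ range (M - p), g p q
      = ∑ p ∈ range N, ∑ q ∈ range (M - p), g p q :=
        (sum_subset (range_subset_range.2 (by omega)) fun p _ hp =>
          sum_eq_zero fun q _ =>
            hv p q (Or.inl (Nat.le_of_not_lt (fun h => hp (mem_range.2 h))))).symm
    _ = ∑ p ∈ range N, ∑ q ∈ range N, g p q := by
        refine sum_congr rfl fun p hp => ?_
        have hp' : p < N := mem_range.1 hp
        exact (sum_subset (range_subset_range.2 (by omega)) fun q _ hq =>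
          hv p q (Or.inr (Nat.le_of_not_lt (fun h => hq (mem_range.2 h))))).symm

lemma tri_swap {V : Type*} [AddCommMonoid V] (F : ℕ → ℕ → V) (n : ℕ) :
    ∑ j ∈ range (n + 1), ∑ q ∈ range (n + 1 - j), F j q
      = ∑ q ∈ range (n + 1), ∑ j ∈ range (n + 1 - q), F j q := by
  rw [← tri_reindex (fun j q => F j q) (n + 1), ← tri_reindex (fun q j => F j q) (n + 1)]
  refine sum_congr rfl fun k _ => ?_
  have := sum_range_reflect (fun i => F (k - i) i) (k + 1)
  rw [← this]
  refine sum_congr rfl fun i hi => ?_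
  have hi' : i < k + 1 := mem_range.1 hi
  have h1 : k + 1 - 1 - i = k - i := by omega
  have h2 : k - (k - i) = i := by omega
  rw [h1, h2]

lemma inv_fact_eq (i k : ℕ) (h : i ≤ k) :
    ((k.factorial : K))⁻¹ * ((k.choose i : ℕ) : K)
      = ((i.factorial : K))⁻¹ * (((k - i).factorial : K))⁻¹ := by
  have h1 : ((k.choose i * i.factorial * (k - i).factorial : ℕ) : K) = (k.factorial : K) := by
    exact_mod_cast congrArg (Nat.cast : ℕ → K) (Nat.choose_mul_factorial_mul_factorial h)
  push_cast at h1
  have h2 : (k.factorial : K) ≠ 0 := Nat.cast_ne_zero.2 (Nat.factorial_ne_zero k)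
  have h3 : (i.factorial : K) ≠ 0 := Nat.cast_ne_zero.2 (Nat.factorial_ne_zero i)
  have h4 : (((k - i).factorial : ℕ) : K) ≠ 0 := Nat.cast_ne_zero.2 (Nat.factorial_ne_zero _)
  field_simp
  linear_combination h1

lemma alt_sum_choose (k : ℕ) :
    ∑ i ∈ range (k + 1), ((-1 : K) ^ i * (((k + 1).choose i : ℕ) : K)) = (-1 : K) ^ k := by
  have h0 : ∑ i ∈ range (k + 2), ((-1 : ℤ) ^ i * ((k + 1).choose i : ℤ)) = 0 := by
    have := Int.alternating_sum_range_choose (n := k + 1)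
    rwa [if_neg (Nat.succ_ne_zero k)] at this
  rw [sum_range_succ] at h0
  have h1 : ∑ i ∈ range (k + 1), ((-1 : ℤ) ^ i * ((k + 1).choose i : ℤ)) = (-1 : ℤ) ^ k := by
    have h2 : ((-1 : ℤ)) ^ (k + 1) = -(-1 : ℤ) ^ k := by ring
    simp only [Nat.choose_self, Nat.cast_one, mul_one, h2] at h0
    linarith
  calc ∑ i ∈ range (k + 1), ((-1 : K) ^ i * (((k + 1).choose i : ℕ) : K))
      = ((∑ i ∈ range (k + 1), ((-1 : ℤ) ^ i * ((k + 1).choose i : ℤ)) : ℤ) : K) := by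
        push_cast; rfl
    _ = (-1 : K) ^ k := by rw [h1]; push_cast; rfl

lemma hockey (p q : ℕ) :
    ∑ j ∈ range (p + 1), (((q + j).choose q : ℕ) : K)
      = (((p + q + 1).choose (q + 1) : ℕ) : K) := by
  have h0 : ∑ j ∈ range (p + 1), (q + j).choose q = (p + q + 1).choose (q + 1) := by
    have h1 := Nat.sum_Icc_choose (q + p) q
    have h2 : ∑ i ∈ Finset.Icc q (q + p), i.choose q
        = ∑ j ∈ range (q + p + 1 - q), (q + j).choose q := by
      rw [← Finset.Ico_add_one_right_eq_Icc, Finset.sum_Ico_eq_sum_range]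
    have h3 : q + p + 1 - q = p + 1 := by omega
    rw [h3] at h2
    rw [h2] at h1
    rw [h1]
    congr 2
    omega
  exact_mod_cast congrArg (Nat.cast : ℕ → K) h0

/-- The adjoint action of `f`. -/
def adF (f x : Module.End K E) : Module.End K E := f * x - x * f

lemma sgn_zero : sgn 0 = 1 := by decide

lemma br_pair (f : Module.End K E) (a : E) (x : Module.End K E) (y : E) :
    br 0 1 (f, a) (x, y) = (f * x - x * f, f y - x a) := by
  simp [br, sgn_zero]

lemma prod_sum {α β ι : Type*} [AddCommMonoid α] [AddCommMonoid β] (s : Finset ι)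
    (g : ι → α) (h : ι → β) :
    ∑ i ∈ s, (g i, h i) = (∑ i ∈ s, g i, ∑ i ∈ s, h i) := by
  classical
  induction s using Finset.induction_on with
  | empty => simp; rfl
  | insert _ _ h ih => simp [Finset.sum_insert h, ih, Prod.ext_iff]

lemma adF_iter (f X : Module.End K E) (k : ℕ) :
    (adF f)^[k] X = ∑ i ∈ range (k + 1),
      ((-1 : K) ^ (k - i) * ((k.choose i : ℕ) : K)) • (f ^ i * X * f ^ (k - i)) := by
  have hL : adF f = ⇑(LinearMap.mulLeft K f + (-1 : K) • LinearMap.mulRight K f) := by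
    funext x
    simp [adF, sub_eq_add_neg]
  have hc : Commute (LinearMap.mulLeft K f) ((-1 : K) • LinearMap.mulRight K f) :=
    (LinearMap.commute_mulLeft_right f f).smul_right _
  rw [hL, ← Module.End.pow_apply, hc.add_pow' k,
    Finset.Nat.sum_antidiagonal_eq_sum_range_succ_mk, LinearMap.sum_apply]
  refine sum_congr rfl fun i hi => ?_
  have hi' : i ≤ k := by have := mem_range.1 hi; omega
  rw [LinearMap.smul_apply, Module.End.mul_apply, smul_pow, LinearMap.pow_mulLeft,
    LinearMap.pow_mulRight, LinearMap.smul_apply, LinearMap.mulRight_apply,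
    LinearMap.map_smul, LinearMap.mulLeft_apply, smul_comm]
  rw [← Nat.cast_smul_eq_nsmul K, smul_smul, mul_assoc (f ^ i)]

lemma iterF (f : Module.End K E) (a : E) (n : ℕ) (x : Module.End K E) (y : E) :
    (fun p => br 0 1 (f, a) p)^[n] (x, y)
      = ((adF f)^[n] x,
         (f ^ n) y - ∑ j ∈ range n, (f ^ j * ((adF f)^[n - 1 - j] x)) a) := by
  induction n with
  | zero => simp
  | succ n ih =>
    rw [Function.iterate_succ_apply', ih]
    show br 0 1 (f, a) _ = _
    rw [br_pair]
    refine Prod.ext ?_ ?_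
    · show f * ((adF f)^[n] x) - ((adF f)^[n] x) * f = (adF f)^[n + 1] x
      rw [Function.iterate_succ_apply' (adF f) n x]
      rfl
    · show f ((f ^ n) y - ∑ j ∈ range n, (f ^ j * ((adF f)^[n - 1 - j] x)) a)
          - ((adF f)^[n] x) a
        = (f ^ (n + 1)) y - ∑ j ∈ range (n + 1), (f ^ j * ((adF f)^[n + 1 - 1 - j] x)) a
      have hsum : ∑ j ∈ range (n + 1), (f ^ j * ((adF f)^[n + 1 - 1 - j] x)) a
          = (∑ j ∈ range n, (f ^ (j + 1) * ((adF f)^[n - 1 - j] x)) a)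
            + (f ^ 0 * ((adF f)^[n] x)) a := by
        rw [sum_range_succ' (fun j => (f ^ j * ((adF f)^[n + 1 - 1 - j] x)) a) n]
        congr 1
        refine sum_congr rfl fun j hj => ?_
        have : n + 1 - 1 - (j + 1) = n - 1 - j := by omega
        rw [this]
      rw [hsum, map_sub, map_sum]
      have h1 : f ((f ^ n) y) = (f ^ (n + 1)) y := by
        rw [pow_succ']
        rfl
      have h2 : ∀ j ∈ range n, f ((f ^ j * ((adF f)^[n - 1 - j] x)) a)
          = (f ^ (j + 1) * ((adF f)^[n - 1 - j] x)) a := by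
        intro j _
        rw [pow_succ', mul_assoc]
        rfl
      rw [h1, sum_congr rfl h2, pow_zero, one_mul]
      abel

end Aux

section Canon

set_option linter.unusedSectionVars false
open Finset

variable (f X : Module.End K E) (N : ℕ)

lemma pow_van (hf : f ^ N = 0) : ∀ k, N ≤ k → f ^ k = 0 := by
  intro k hk
  have : f ^ k = f ^ N * f ^ (k - N) := by rw [← pow_add]; congr 1; omega
  rw [this, hf, zero_mul]

lemma mono_van (hf : f ^ N = 0) (w : ℕ → ℕ → K) :
    ∀ p q, N ≤ p ∨ N ≤ q → w p q • (f ^ p * X * f ^ q) = 0 := by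
  intro p q h
  rcases h with h | h
  · rw [pow_van f N hf p h, zero_mul, zero_mul, smul_zero]
  · rw [pow_van f N hf q h, mul_zero, smul_zero]

/-- Canonical form of `X' = e^{ad f} X`. -/
lemma canA {m : ℕ} (hf : f ^ N = 0) (hm : 2 * N + 1 ≤ m) :
    X + ∑ n ∈ range m, (((n + 1).factorial : K))⁻¹ • (adF f)^[n + 1] X
      = ∑ p ∈ range m, ∑ q ∈ range m,
          ((-1 : K) ^ q * ((p.factorial : K)⁻¹ * (q.factorial : K)⁻¹)) • (f ^ p * X * f ^ q) := by
  have h0 : X + ∑ n ∈ range m, (((n + 1).factorial : K))⁻¹ • (adF f)^[n + 1] X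
      = ∑ k ∈ range (m + 1), ((k.factorial : K))⁻¹ • (adF f)^[k] X := by
    rw [sum_range_succ' (fun k => ((k.factorial : K))⁻¹ • (adF f)^[k] X) m]
    simp [add_comm]
  rw [h0]
  have h1 : ∀ k ∈ range (m + 1), ((k.factorial : K))⁻¹ • (adF f)^[k] X
      = ∑ i ∈ range (k + 1),
          (fun p q => ((-1 : K) ^ q * ((p.factorial : K)⁻¹ * (q.factorial : K)⁻¹))
            • (f ^ p * X * f ^ q)) i (k - i) := by
    intro k _
    rw [adF_iter, smul_sum]
    refine sum_congr rfl fun i hi => ?_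
    have hi' : i ≤ k := by have := mem_range.1 hi; omega
    rw [smul_smul]
    have h2 := inv_fact_eq (K := K) i k hi'
    congr 1
    calc ((k.factorial : K))⁻¹ * ((-1 : K) ^ (k - i) * ((k.choose i : ℕ) : K))
        = (-1 : K) ^ (k - i) * (((k.factorial : K))⁻¹ * ((k.choose i : ℕ) : K)) := by ring
      _ = (-1 : K) ^ (k - i) * ((i.factorial : K)⁻¹ * (((k - i).factorial : K))⁻¹) := by
          rw [h2]
  rw [sum_congr rfl h1]
  exact tri_to_square (fun p q => ((-1 : K) ^ q * ((p.factorial : K)⁻¹ * (q.factorial : K)⁻¹)) • (f ^ p * X * f ^ q)) N (mono_van f X N hf (fun p q => (-1 : K) ^ q * ((p.factorial : K)⁻¹ * (q.factorial : K)⁻¹))) (M := m + 1) (m := m) (by omega) (by omega)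

/-- Canonical form of `C`. -/
lemma canC {m : ℕ} (hf : f ^ N = 0) (hm : 2 * N + 1 ≤ m) :
    ∑ n ∈ range m, (((n + 1).factorial : K))⁻¹ •
        ∑ j ∈ range (n + 1), f ^ j * ((adF f)^[n - j] X)
      = ∑ p ∈ range m, ∑ q ∈ range m,
          ((-1 : K) ^ q * ((p.factorial : K)⁻¹ * (((q + 1).factorial : K))⁻¹))
            • (f ^ p * X * f ^ q) := by
  have key : ∀ n, (((n + 1).factorial : K))⁻¹ •
        ∑ j ∈ range (n + 1), f ^ j * ((adF f)^[n - j] X)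
      = ∑ i ∈ range (n + 1),
          (fun p q => ((-1 : K) ^ q * ((p.factorial : K)⁻¹ * (((q + 1).factorial : K))⁻¹))
            • (f ^ p * X * f ^ q)) (n - i) i := by
    intro n
    -- (a) expand each `f^j * (ad f)^[n-j] X`
    have e1 : ∀ j ∈ range (n + 1), f ^ j * ((adF f)^[n - j] X)
        = ∑ i ∈ range (n + 1 - j),
            ((-1 : K) ^ i * (((n - j).choose i : ℕ) : K)) • (f ^ (n - i) * X * f ^ i) := by
      intro j hj
      have hj' : j ≤ n := by have := mem_range.1 hj; omega
      rw [adF_iter, mul_sum]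
      have e2 := (sum_range_reflect
        (fun i => f ^ j * (((-1 : K) ^ (n - j - i) * (((n - j).choose i : ℕ) : K))
          • (f ^ i * X * f ^ (n - j - i)))) (n - j + 1)).symm
      rw [e2]
      have e3 : n - j + 1 = n + 1 - j := by omega
      rw [e3]
      refine sum_congr rfl fun i hi => ?_
      have hi' : i ≤ n - j := by
        have := mem_range.1 hi; omega
      have h4 : n + 1 - j - 1 - i = n - j - i := by omega
      rw [h4]
      have h5 : n - j - (n - j - i) = i := by omega
      have h6 : (n - j).choose (n - j - i) = (n - j).choose i := Nat.choose_symm hi'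
      have h7 : j + (n - j - i) = n - i := by omega
      rw [h5, h6, mul_smul_comm, ← mul_assoc, ← mul_assoc, ← pow_add, h7]
    rw [sum_congr rfl e1]
    -- (b) swap the two triangle indices
    rw [tri_swap (fun j i => ((-1 : K) ^ i * (((n - j).choose i : ℕ) : K))
      • (f ^ (n - i) * X * f ^ i)) n]
    -- (c) sum the binomial coefficients (hockey stick)
    rw [smul_sum]
    refine sum_congr rfl fun i hi => ?_
    have hi' : i ≤ n := by have := mem_range.1 hi; omega
    have e4 : ∑ j ∈ range (n + 1 - i),
        ((-1 : K) ^ i * (((n - j).choose i : ℕ) : K)) • (f ^ (n - i) * X * f ^ i)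
      = ((-1 : K) ^ i * (((n + 1).choose (i + 1) : ℕ) : K)) • (f ^ (n - i) * X * f ^ i) := by
      rw [← sum_smul]
      congr 1
      rw [← mul_sum]
      congr 1
      have e5 := (sum_range_reflect (fun j => (((n - j).choose i : ℕ) : K)) (n + 1 - i)).symm
      rw [e5]
      have e6 : n + 1 - i = (n - i) + 1 := by omega
      rw [e6]
      have e7 : ∀ j ∈ range ((n - i) + 1),
          (((n - ((n - i) + 1 - 1 - j)).choose i : ℕ) : K) = (((i + j).choose i : ℕ) : K) := by
        intro j hj
        have hj' : j ≤ n - i := by have := mem_range.1 hj; omega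
        have : n - ((n - i) + 1 - 1 - j) = i + j := by omega
        rw [this]
      rw [sum_congr rfl e7, hockey (n - i) i]
      congr 2
      omega
    rw [e4, smul_smul]
    congr 1
    have h8 := inv_fact_eq (K := K) (i + 1) (n + 1) (by omega)
    have h9 : n + 1 - (i + 1) = n - i := by omega
    rw [h9] at h8
    calc (((n + 1).factorial : K))⁻¹ * ((-1 : K) ^ i * (((n + 1).choose (i + 1) : ℕ) : K))
        = (-1 : K) ^ i * ((((n + 1).factorial : K))⁻¹ * (((n + 1).choose (i + 1) : ℕ) : K)) := by
          ring
      _ = (-1 : K) ^ i * (((i + 1).factorial : K)⁻¹ * (((n - i).factorial : K))⁻¹) := by rw [h8]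
      _ = (-1 : K) ^ i * (((n - i).factorial : K)⁻¹ * (((i + 1).factorial : K))⁻¹) := by ring
  rw [sum_congr rfl fun n _ => key n]
  -- (d) reflect each row and collapse the triangle to the square
  have refl : ∀ n ∈ range m, ∑ i ∈ range (n + 1),
      (fun p q => ((-1 : K) ^ q * ((p.factorial : K)⁻¹ * (((q + 1).factorial : K))⁻¹))
        • (f ^ p * X * f ^ q)) (n - i) i
    = ∑ i ∈ range (n + 1),
      (fun p q => ((-1 : K) ^ q * ((p.factorial : K)⁻¹ * (((q + 1).factorial : K))⁻¹))
        • (f ^ p * X * f ^ q)) i (n - i) := by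
    intro n _
    have := (sum_range_reflect
      (fun i => (fun p q => ((-1 : K) ^ q * ((p.factorial : K)⁻¹ * (((q + 1).factorial : K))⁻¹))
        • (f ^ p * X * f ^ q)) (n - i) i) (n + 1)).symm
    rw [this]
    refine sum_congr rfl fun i hi => ?_
    have hi' : i ≤ n := by have := mem_range.1 hi; omega
    have h1 : n + 1 - 1 - i = n - i := by omega
    have h2 : n - (n - i) = i := by omega
    rw [h1, h2]
  rw [sum_congr rfl refl]
  exact tri_to_square (fun p q => ((-1 : K) ^ q * ((p.factorial : K)⁻¹ * (((q + 1).factorial : K))⁻¹)) • (f ^ p * X * f ^ q)) N (mono_van f X N hf (fun p q => (-1 : K) ^ q * ((p.factorial : K)⁻¹ * (((q + 1).factorial : K))⁻¹))) (M := m) (m := m) (by omega) (by omega)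

/-- Multiplying the canonical form of `X'` by `P` gives the canonical form of `C`. -/
lemma canP {m : ℕ} (hf : f ^ N = 0) (hm : 2 * N + 1 ≤ m) :
    (∑ p ∈ range m, ∑ q ∈ range m,
        ((-1 : K) ^ q * ((p.factorial : K)⁻¹ * (q.factorial : K)⁻¹)) • (f ^ p * X * f ^ q))
      * (∑ r ∈ range m, (((r + 1).factorial : K))⁻¹ • f ^ r)
      = ∑ p ∈ range m, ∑ q ∈ range m,
          ((-1 : K) ^ q * ((p.factorial : K)⁻¹ * (((q + 1).factorial : K))⁻¹))
            • (f ^ p * X * f ^ q) := by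
  rw [sum_mul]
  refine sum_congr rfl fun p _ => ?_
  have e1 : (∑ q ∈ range m,
        ((-1 : K) ^ q * ((p.factorial : K)⁻¹ * (q.factorial : K)⁻¹)) • (f ^ p * X * f ^ q))
      * (∑ r ∈ range m, (((r + 1).factorial : K))⁻¹ • f ^ r)
      = ∑ q ∈ range m, ∑ r ∈ range m,
          (fun q r => (((-1 : K) ^ q * ((p.factorial : K)⁻¹ * (q.factorial : K)⁻¹))
            * (((r + 1).factorial : K))⁻¹) • (f ^ p * X * f ^ (q + r))) q r := by
    rw [sum_mul]
    refine sum_congr rfl fun q _ => ?_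
    rw [mul_sum]
    refine sum_congr rfl fun r _ => ?_
    rw [smul_mul_assoc, mul_smul_comm, smul_smul, mul_assoc (f ^ p * X), ← pow_add]
  rw [e1]
  have hv : ∀ q r, N ≤ q ∨ N ≤ r →
      (fun q r => (((-1 : K) ^ q * ((p.factorial : K)⁻¹ * (q.factorial : K)⁻¹))
        * (((r + 1).factorial : K))⁻¹) • (f ^ p * X * f ^ (q + r))) q r = 0 := by
    intro q r h
    have : f ^ (q + r) = 0 := pow_van f N hf (q + r) (by omega)
    simp only [this, mul_zero, smul_zero]
  rw [← tri_to_square _ N hv (M := m) (m := m) (by omega) (by omega)]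
  refine sum_congr rfl fun k hk => ?_
  have e2 : ∀ i ∈ range (k + 1),
      (fun q r => (((-1 : K) ^ q * ((p.factorial : K)⁻¹ * (q.factorial : K)⁻¹))
        * (((r + 1).factorial : K))⁻¹) • (f ^ p * X * f ^ (q + r))) i (k - i)
      = (((-1 : K) ^ i * ((p.factorial : K)⁻¹ * (i.factorial : K)⁻¹))
          * (((k - i + 1).factorial : K))⁻¹) • (f ^ p * X * f ^ k) := by
    intro i hi
    have hi' : i ≤ k := by have := mem_range.1 hi; omega
    have : i + (k - i) = k := by omega
    simp only [this]
  rw [sum_congr rfl e2, ← sum_smul]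
  congr 1
  -- scalar identity
  have e3 : ∀ i ∈ range (k + 1),
      ((-1 : K) ^ i * ((p.factorial : K)⁻¹ * (i.factorial : K)⁻¹))
        * (((k - i + 1).factorial : K))⁻¹
      = (p.factorial : K)⁻¹ * (((k + 1).factorial : K))⁻¹
          * ((-1 : K) ^ i * (((k + 1).choose i : ℕ) : K)) := by
    intro i hi
    have hi' : i ≤ k := by have := mem_range.1 hi; omega
    have h8 := inv_fact_eq (K := K) i (k + 1) (by omega)
    have h9 : k + 1 - i = k - i + 1 := by omega
    rw [h9] at h8
    linear_combination (-((-1 : K) ^ i * (p.factorial : K)⁻¹)) * h8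
  rw [sum_congr rfl e3, ← mul_sum, alt_sum_choose]
  ring

end Canon



theorem stmt_11 (D : Module.End K E) (s : E) (hD : D * D = 0) (hs : D s = 0)
    (u f : Module.End K E) (a t : E)
    (hMC : (D + u) * (D + u) = 0)
    (N : ℕ) (hf : f ^ N = 0)
    (m : ℕ) (hm : 2 * N + 1 ≤ m)
    (u' : Module.End K E) (t' : E)
    (hg : (u', t') = gaugeM m D s (f, a) (u, t)) :
    -- `s + t'` and `e^f(s+t)` have the same class in `H^0(E^* ⊗ A, ∂ + u')`
    ((s + t') - expo m f (s + t) ∈ Set.range (D + u')) ∧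
    -- there is `b` with `e^{(0,b)} e^{(f,a)} ∗ (u,t) = (u', e^f(s+t) − s)`
    (∃ b : E, gaugeM m D s ((0 : Module.End K E), b) (u', t')
        = (u', expo m f (s + t) - s)) := by
  classical
  open Finset in
  -- the initial bracket
  have hζ : br 0 1 (f, a) (u, t) - dM D s 0 (f, a)
      = (adF f (D + u), f (s + t) - (D + u) a) := by
    simp only [br, dM, zero_mul, sgn_zero, one_smul, adF, Prod.mk_sub_mk]
    refine Prod.ext ?_ ?_
    · show f * u - u * f - (D * f - f * D) = f * (D + u) - (D + u) * f
      noncomm_ring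
    · show f t - u a - (D a - f s) = f (s + t) - (D + u) a
      rw [map_add, LinearMap.add_apply]
      abel
  -- the gauge action in closed form
  have hgpair : gaugeM m D s (f, a) (u, t)
      = (u + ∑ n ∈ range m, (((n + 1).factorial : K))⁻¹ • (adF f)^[n + 1] (D + u),
         t + ∑ n ∈ range m, (((n + 1).factorial : K))⁻¹ •
            ((f ^ (n + 1)) (s + t)
              - ∑ j ∈ range (n + 1), (f ^ j * ((adF f)^[n - j] (D + u))) a)) := by
    unfold gaugeM
    rw [hζ]
    have hterm : ∀ n ∈ range m, (((n + 1).factorial : K))⁻¹ •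
        (fun y => br 0 1 (f, a) y)^[n] (adF f (D + u), f (s + t) - (D + u) a)
        = ((((n + 1).factorial : K))⁻¹ • (adF f)^[n + 1] (D + u),
           (((n + 1).factorial : K))⁻¹ • ((f ^ (n + 1)) (s + t)
              - ∑ j ∈ range (n + 1), (f ^ j * ((adF f)^[n - j] (D + u))) a)) := by
      intro n _
      rw [iterF]
      rw [Prod.smul_mk]
      refine Prod.ext ?_ ?_
      · show (((n + 1).factorial : K))⁻¹ • (adF f)^[n] (adF f (D + u)) = _
        rw [← Function.iterate_succ_apply (adF f) n (D + u)]
      · show (((n + 1).factorial : K))⁻¹ •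
            ((f ^ n) (f (s + t) - (D + u) a)
              - ∑ j ∈ range n, (f ^ j * ((adF f)^[n - 1 - j] (adF f (D + u)))) a) = _
        congr 1
        have c1 : (f ^ n) (f (s + t) - (D + u) a)
            = (f ^ (n + 1)) (s + t) - (f ^ n * (D + u)) a := by
          rw [map_sub, pow_succ]
          rfl
        have c2 : ∀ j ∈ range n,
            (f ^ j * ((adF f)^[n - 1 - j] (adF f (D + u)))) a
            = (f ^ j * ((adF f)^[n - j] (D + u))) a := by
          intro j hj
          have hj' : j < n := mem_range.1 hj
          have : n - j = (n - 1 - j) + 1 := by omega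
          rw [this, Function.iterate_succ_apply]
        have c3 : ∑ j ∈ range (n + 1), (f ^ j * ((adF f)^[n - j] (D + u))) a
            = (∑ j ∈ range n, (f ^ j * ((adF f)^[n - j] (D + u))) a)
              + (f ^ n * (D + u)) a := by
          rw [sum_range_succ]
          congr 2
          rw [Nat.sub_self]
          rfl
        rw [c1, sum_congr rfl c2, c3]
        abel
    rw [sum_congr rfl hterm, prod_sum]
    rfl
  rw [hgpair, Prod.mk.injEq] at hg
  obtain ⟨hu', ht'⟩ := hg
  -- canonical forms
  have hA := canA f (D + u) N (m := m) hf hm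
  have hC := canC f (D + u) N (m := m) hf hm
  have hP := canP f (D + u) N (m := m) hf hm
  set Pop : Module.End K E := ∑ r ∈ range m, (((r + 1).factorial : K))⁻¹ • f ^ r with hPop
  set Cv : E := ∑ n ∈ range m, (((n + 1).factorial : K))⁻¹ •
      ∑ j ∈ range (n + 1), (f ^ j * ((adF f)^[n - j] (D + u))) a with hCv
  -- main identity : (D + u') (Pop a) = Cv
  have hDu : D + u' = (D + u) + ∑ n ∈ range m,
      (((n + 1).factorial : K))⁻¹ • (adF f)^[n + 1] (D + u) := by
    rw [hu', ← add_assoc]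
  have hmain : (D + u') (Pop a) = Cv := by
    rw [hDu, hA, ← Module.End.mul_apply, hP, ← hC, hCv]
    rw [LinearMap.sum_apply]
    refine sum_congr rfl fun n _ => ?_
    rw [LinearMap.smul_apply, LinearMap.sum_apply]
  -- the exponential, applied to s + t
  obtain ⟨m', hm'⟩ : ∃ m', m = m' + 1 := ⟨m - 1, by omega⟩
  have hexp : expo m f (s + t) = (s + t)
      + ∑ n ∈ range m, (((n + 1).factorial : K))⁻¹ • (f ^ (n + 1)) (s + t) := by
    have e0 : expo m f (s + t)
        = ∑ k ∈ range m, ((k.factorial : K))⁻¹ • (f ^ k) (s + t) := by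
      unfold expo
      rw [LinearMap.sum_apply]
      refine sum_congr rfl fun k _ => ?_
      rw [LinearMap.smul_apply]
    rw [e0, hm', sum_range_succ' (fun k => ((k.factorial : K))⁻¹ • (f ^ k) (s + t)) m']
    rw [sum_range_succ (fun k => (((k + 1).factorial : K))⁻¹ • (f ^ (k + 1)) (s + t)) m']
    have hz : (((m' + 1).factorial : K))⁻¹ • (f ^ (m' + 1)) (s + t) = 0 := by
      rw [pow_van f N hf (m' + 1) (by omega), LinearMap.zero_apply, smul_zero]
    rw [hz, add_zero]
    have g0 : ((Nat.factorial 0 : K))⁻¹ • (f ^ 0) (s + t) = s + t := by simp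
    rw [g0, add_comm]
  -- the key cohomological identity
  have hkey : Cv = expo m f (s + t) - s - t' := by
    rw [ht', hexp]
    have hsplit : ∑ n ∈ range m, (((n + 1).factorial : K))⁻¹ •
          ((f ^ (n + 1)) (s + t)
            - ∑ j ∈ range (n + 1), (f ^ j * ((adF f)^[n - j] (D + u))) a)
        = (∑ n ∈ range m, (((n + 1).factorial : K))⁻¹ • (f ^ (n + 1)) (s + t)) - Cv := by
      rw [hCv, ← sum_sub_distrib]
      refine sum_congr rfl fun n _ => ?_
      rw [smul_sub]
    rw [hsplit]
    abel
  constructor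
  · exact ⟨-(Pop a), by rw [map_neg, hmain, hkey]; abel⟩
  · refine ⟨-(Pop a), ?_⟩
    have hζ0 : br 0 1 ((0 : Module.End K E), -(Pop a)) (u', t')
        - dM D s 0 ((0 : Module.End K E), -(Pop a))
        = ((0 : Module.End K E), -((D + u') (-(Pop a)))) := by
      simp only [br, dM, zero_mul, sgn_zero, one_smul, Prod.mk_sub_mk]
      refine Prod.ext ?_ ?_
      · show (0 : Module.End K E) * u' - u' * 0 - (D * 0 - 0 * D) = 0
        noncomm_ring
      · show (0 : Module.End K E) t' - u' (-(Pop a)) - (D (-(Pop a)) - (0 : Module.End K E) s)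
            = -((D + u') (-(Pop a)))
        rw [LinearMap.add_apply, LinearMap.zero_apply, LinearMap.zero_apply]
        abel
    have hiter0 : ∀ n : ℕ, (fun y => br 0 1 ((0 : Module.End K E), -(Pop a)) y)^[n + 1]
        ((0 : Module.End K E), -((D + u') (-(Pop a)))) = ((0 : Module.End K E), (0 : E)) := by
      intro n
      induction n with
      | zero =>
        rw [Function.iterate_one]
        simp [br, sgn_zero]
      | succ n ih =>
        rw [Function.iterate_succ_apply', ih]
        simp [br, sgn_zero]
    unfold gaugeM
    rw [hζ0]
    have hsum0 : ∑ n ∈ range m, (((n + 1).factorial : K))⁻¹ •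
        (fun y => br 0 1 ((0 : Module.End K E), -(Pop a)) y)^[n]
          ((0 : Module.End K E), -((D + u') (-(Pop a))))
        = ((0 : Module.End K E), -((D + u') (-(Pop a)))) := by
      rw [hm', sum_range_succ' (fun n => (((n + 1).factorial : K))⁻¹ •
        (fun y => br 0 1 ((0 : Module.End K E), -(Pop a)) y)^[n]
          ((0 : Module.End K E), -((D + u') (-(Pop a))))) m']
      have z1 : ∀ n ∈ range m', (((n + 1 + 1).factorial : K))⁻¹ •
          (fun y => br 0 1 ((0 : Module.End K E), -(Pop a)) y)^[n + 1]
            ((0 : Module.End K E), -((D + u') (-(Pop a))))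
          = (0 : Module.End K E × E) := by
        intro n _
        rw [hiter0 n]
        simp [Prod.ext_iff]
      rw [sum_congr rfl z1, sum_const_zero, zero_add, Function.iterate_zero_apply]
      simp
    rw [hsum0]
    have hfin : t' + -((D + u') (-(Pop a))) = expo m f (s + t) - s := by
      rw [map_neg, neg_neg, hmain, hkey]
      abel
    calc (u', t') + ((0 : Module.End K E), -((D + u') (-(Pop a))))
        = (u' + 0, t' + -((D + u') (-(Pop a)))) := rfl
      _ = (u', expo m f (s + t) - s) := by rw [add_zero, hfin]

end Stmt11
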